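/- Consider the parameters α = -1/11, β = 1/10, γ = -2/15, δ = 1/15 and μ = 3. The synchronous 3-step matrix Ψ^{3,3} with rows (8/11, 3/10) and (-2/5, 6/5) has every complex eigenvalue of modulus strictly less than 1, while the asynchronous 3-step matrix Ψ^{3,1} with rows (8/11, 3/10) and (-1442/3375, 4096/3375) has every complex eigenvalue of modulus strictly greater than 1; in particular asymptotic stability of the synchronous (3,3)-dynamics does not imply asymptotic stability of the (3,1)-asynchronous dynamics with the same parameters. -/

import Mathlib

lemma spec_quad (a b c d : ℝ) (z : ℂ)
    (hz : z ∈ spectrum ℂ ((!![a,b;c,d]).map Complex.ofReal)) :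
    z^2 - ((a:ℂ)+(d:ℂ))*z + ((a:ℂ)*(d:ℂ) - (b:ℂ)*(c:ℂ)) = 0 := by
  rw [spectrum.mem_iff, Matrix.isUnit_iff_isUnit_det, isUnit_iff_ne_zero, not_not] at hz
  rw [Matrix.det_fin_two] at hz
  simp [Matrix.algebraMap_eq_diagonal, Matrix.diagonal, Matrix.map] at hz
  ring_nf at hz ⊢
  linear_combination hz

lemma quad_abs (t d : ℝ) (z : ℂ) (hdisc : t^2 < 4*d)
    (hz : z^2 - (t:ℂ)*z + (d:ℂ) = 0) : ‖z‖^2 = d := by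
  set w := (starRingEnd ℂ) z with hw
  have hzw : w^2 - (t:ℂ)*w + (d:ℂ) = 0 := by
    have := congrArg (starRingEnd ℂ) hz
    simpa [hw, map_sub, map_add, map_mul, map_pow] using this
  have hne : z ≠ w := by
    intro h
    have him : z.im = 0 := by
      have := congrArg Complex.im h
      simp [hw, Complex.conj_im] at this
      linarith
    have hre : z.re^2 - t*z.re + d = 0 := by
      have := congrArg Complex.re hz
      simp [Complex.mul_re, Complex.sub_re, Complex.add_re, pow_two, him] at this
      linarith [this]
    nlinarith [sq_nonneg (2*z.re - t)]
  have hsum : z + w = (t:ℂ) := by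
    have hfac : (z - w) * (z + w - (t:ℂ)) = 0 := by linear_combination hz - hzw
    rcases mul_eq_zero.mp hfac with h | h
    · exact absurd (sub_eq_zero.mp h) hne
    · linear_combination h
  have hprod : z * w = (d:ℂ) := by linear_combination z * hsum - hz
  rw [hw, Complex.mul_conj] at hprod
  have : Complex.normSq z = d := by exact_mod_cast hprod
  rw [Complex.sq_norm, this]

/-- Parameters `α = -1/11`, `β = 1/10`, `γ = -2/15`, `δ = 1/15`, `μ = 3`:
the synchronous matrix `Ψ^{3,3} = I + 3P` has all eigenvalues of modulus `< 1`,
while the asynchronous matrix `Ψ^{3,1}` has all eigenvalues of modulus `> 1`. -/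
theorem stmt11 :
    (!![1 + 3 * (-1/11 : ℝ), 3 * (1/10); 3 * (-2/15), 1 + 3 * (1/15)] =
        !![(8 : ℝ)/11, 3/10; -2/5, 6/5]) ∧
    (∀ z ∈ spectrum ℂ ((!![(8 : ℝ)/11, 3/10; -2/5, 6/5]).map Complex.ofReal),
      ‖z‖ < 1) ∧
    (!![1 + 3 * (-1/11 : ℝ), 3 * (1/10);
        (-2/15) * ∑ i ∈ Finset.range 3, (1 + (1/15 : ℝ)) ^ i, (1 + (1/15 : ℝ)) ^ 3] =
        !![(8 : ℝ)/11, 3/10; -1442/3375, 4096/3375]) ∧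
    (∀ z ∈ spectrum ℂ ((!![(8 : ℝ)/11, 3/10; -1442/3375, 4096/3375]).map Complex.ofReal),
      1 < ‖z‖) := by
  refine ⟨by norm_num [Matrix.ext_iff.symm, Matrix.ext_iff], ?_,
    by norm_num [Matrix.ext_iff.symm, Matrix.ext_iff, Finset.sum_range_succ], ?_⟩
  · intro z hz
    have h := spec_quad (8/11) (3/10) (-2/5) (6/5) z hz
    have habs : ‖z‖^2 = (273/275 : ℝ) := by
      apply quad_abs (106/55) (273/275) z (by norm_num)
      push_cast
      push_cast at h
      linear_combination h
    nlinarith [norm_nonneg z]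
  · intro z hz
    have h := spec_quad (8/11) (3/10) (-1442/3375) (4096/3375) z hz
    have habs : ‖z‖^2 = (187633/185625 : ℝ) := by
      apply quad_abs (72056/37125) (187633/185625) z (by norm_num)
      push_cast
      push_cast at h
      linear_combination h
    nlinarith [norm_nonneg z]
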